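/- arXiv:quant-ph/0504075 — 2 statements merged into one kernel-verified Lean document; each statement's English description precedes it below -/
import Mathlib

section
/- Let τ ⊆ F^d be a finite set whose affine span has dimension q-1 with q+1 < d. Then the fraction of lines ℓ in F^d for which the affine span of ℓ ∪ τ has dimension exactly q+1 is greater than 1 - |F|^{-1}. -/
/-- A line in `F^d` is a 1-dimensional affine subspace. -/
def IsLine (F : Type*) [Field F] (d : ℕ) (ℓ : Set (Fin d → F)) : Prop :=
  ∃ u v : Fin d → F, v ≠ 0 ∧ ℓ = Set.range fun t : F => u + t • v

namespace MLSFD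

open Submodule Module

lemma card_of_fibers {α β : Type*} [Finite α] [Finite β] (f : α → β) (m : ℕ)
    (h : ∀ b, Nat.card {a // f a = b} = m) : Nat.card α = Nat.card β * m := by
  classical
  cases nonempty_fintype α
  cases nonempty_fintype β
  rw [Nat.card_eq_fintype_card, Nat.card_eq_fintype_card,
    ← Fintype.card_congr (Equiv.sigmaFiberEquiv f), Fintype.card_sigma]
  have : ∀ b : β, Fintype.card {a // f a = b} = m := fun b => by
    rw [← Nat.card_eq_fintype_card]; exact h b
  simp [this, Finset.sum_const, mul_comm]

lemma card_fibers_sum {α β : Type*} [Finite α] [Fintype β] (f : α → β) :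
    Nat.card α = ∑ b, Nat.card {a // f a = b} := by
  classical
  cases nonempty_fintype α
  rw [Nat.card_eq_fintype_card, ← Fintype.card_congr (Equiv.sigmaFiberEquiv f),
    Fintype.card_sigma]
  exact Finset.sum_congr rfl fun b _ => Fintype.card_eq_nat_card

/-- Flatten a subtype of a subtype. -/
def flattenEquiv {α : Type*} {P : α → Prop} (Q : α → Prop) :
    {x : {y : α // P y} // Q x.1} ≃ {x : α // P x ∧ Q x} :=
  ⟨fun x => ⟨x.1.1, x.1.2, x.2⟩, fun x => ⟨⟨x.1, x.2.1⟩, x.2.2⟩,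
    fun _ => rfl, fun _ => rfl⟩

variable {F : Type*} [Field F] {d : ℕ}

def lineOf (u v : Fin d → F) : Set (Fin d → F) := Set.range fun t : F => u + t • v

lemma line_eq_iff {u v u₀ v₀ : Fin d → F} (hv : v ≠ 0) :
    lineOf u v = lineOf u₀ v₀ ↔ (∃ c : F, c ≠ 0 ∧ v = c • v₀) ∧ ∃ s : F, u = u₀ + s • v₀ := by
  constructor
  · intro h
    have hu : u ∈ lineOf u₀ v₀ := by
      rw [← h]; exact ⟨0, by simp [lineOf]⟩
    have huv : u + v ∈ lineOf u₀ v₀ := by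
      rw [← h]; exact ⟨1, by simp [lineOf]⟩
    obtain ⟨s, hs⟩ := hu
    obtain ⟨s', hs'⟩ := huv
    simp only at hs hs'
    have hveq : v = (s' - s) • v₀ := by
      have : v = (u₀ + s' • v₀) - (u₀ + s • v₀) := by rw [hs, hs']; abel
      rw [this]; module
    refine ⟨⟨s' - s, ?_, hveq⟩, ⟨s, hs.symm⟩⟩
    intro h0
    rw [h0, zero_smul] at hveq
    exact hv hveq
  · rintro ⟨⟨c, hc, rfl⟩, ⟨s, rfl⟩⟩
    ext x
    constructor
    · rintro ⟨t, rfl⟩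
      exact ⟨s + t * c, by module⟩
    · rintro ⟨t, rfl⟩
      refine ⟨(t - s) / c, ?_⟩
      show u₀ + s • v₀ + ((t - s) / c) • c • v₀ = u₀ + t • v₀
      rw [smul_smul, div_mul_cancel₀ _ hc]
      module

lemma smul_cancel {v₀ : Fin d → F} (hv₀ : v₀ ≠ 0) {a b : F} (h : a • v₀ = b • v₀) : a = b := by
  by_contra hab
  apply hv₀
  have : (a - b) • v₀ = 0 := by rw [sub_smul, h, sub_self]
  rcases smul_eq_zero.mp this with h' | h'
  · exact absurd (sub_eq_zero.mp h') hab
  · exact h'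

lemma fiber_card [Fintype F] {u₀ v₀ : Fin d → F} (hv₀ : v₀ ≠ 0) :
    Nat.card {p : (Fin d → F) × (Fin d → F) // p.2 ≠ 0 ∧ lineOf p.1 p.2 = lineOf u₀ v₀}
      = Fintype.card F * (Fintype.card F - 1) := by
  have e : F × {c : F // c ≠ 0}
      ≃ {p : (Fin d → F) × (Fin d → F) // p.2 ≠ 0 ∧ lineOf p.1 p.2 = lineOf u₀ v₀} := by
    refine Equiv.ofBijective
      (fun sc => ⟨(u₀ + sc.1 • v₀, sc.2.1 • v₀), smul_ne_zero sc.2.2 hv₀, ?_⟩) ⟨?_, ?_⟩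
    · rw [line_eq_iff (smul_ne_zero sc.2.2 hv₀)]
      exact ⟨⟨sc.2.1, sc.2.2, rfl⟩, ⟨sc.1, rfl⟩⟩
    · rintro ⟨s, c, hc⟩ ⟨s', c', hc'⟩ h
      simp only [Subtype.mk.injEq, Prod.mk.injEq] at h
      have h1 : s = s' := smul_cancel hv₀ (by have := h.1; rwa [add_right_inj] at this)
      have h2 : c = c' := smul_cancel hv₀ h.2
      simp [h1, h2]
    · rintro ⟨⟨u, v⟩, hv, hl⟩
      rw [line_eq_iff hv] at hl
      obtain ⟨⟨c, hc, hvc⟩, ⟨s, hus⟩⟩ := hl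
      refine ⟨⟨s, c, hc⟩, ?_⟩
      simp only [Subtype.mk.injEq, Prod.mk.injEq]
      exact ⟨hus.symm, hvc.symm⟩
  rw [← Nat.card_congr e]
  classical
  rw [Nat.card_eq_fintype_card, Fintype.card_prod]
  congr 1
  rw [Fintype.card_subtype_compl, Fintype.card_subtype_eq (0 : F)]

lemma span_line_range (a v : Fin d → F) :
    span F (Set.range fun t : F => a + t • v) = span F {a} ⊔ span F {v} := by
  apply le_antisymm
  · rw [span_le]
    rintro x ⟨t, rfl⟩
    exact add_mem (mem_sup_left (subset_span rfl))
      (mem_sup_right (smul_mem _ _ (subset_span rfl)))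
  · apply sup_le <;> rw [span_le] <;> intro x hx <;>
      rw [Set.mem_singleton_iff] at hx <;> rw [hx]
    · exact subset_span ⟨0, by simp⟩
    · have h1 : a + (1:F) • v ∈ span F (Set.range fun t : F => a + t • v) :=
        subset_span ⟨1, rfl⟩
      have h0 : a + (0:F) • v ∈ span F (Set.range fun t : F => a + t • v) :=
        subset_span ⟨0, rfl⟩
      have := sub_mem h1 h0
      simpa using this

lemma vectorSpan_line_union (u v : Fin d → F) {τ : Set (Fin d → F)} {p : Fin d → F}
    (hp : p ∈ τ) :
    vectorSpan F (lineOf u v ∪ τ) =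
      (vectorSpan F τ ⊔ span F {u - p}) ⊔ span F {v} := by
  rw [vectorSpan_eq_span_vsub_set_right F (Set.mem_union_right _ hp), Set.image_union,
    span_union, vectorSpan_eq_span_vsub_set_right F hp]
  have himg : (· -ᵥ p) '' lineOf u v = Set.range fun t : F => (u - p) + t • v := by
    ext x
    simp only [Set.mem_image, lineOf, Set.mem_range, vsub_eq_sub]
    constructor
    · rintro ⟨y, ⟨t, rfl⟩, rfl⟩; exact ⟨t, by abel⟩
    · rintro ⟨t, rfl⟩; exact ⟨u + t • v, ⟨t, rfl⟩, by abel⟩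
  rw [himg, span_line_range]
  rw [sup_comm]
  ac_rfl

lemma sup_span_singleton_of_mem {U : Submodule F (Fin d → F)} {b : Fin d → F} (hb : b ∈ U) :
    U ⊔ span F {b} = U :=
  sup_eq_left.mpr ((span_singleton_le_iff_mem _ _).mpr hb)

lemma finrank_sup_span_singleton_of_not_mem {U : Submodule F (Fin d → F)} {b : Fin d → F}
    (hb : b ∉ U) : finrank F ↥(U ⊔ span F {b}) = finrank F U + 1 := by
  have hb0 : b ≠ 0 := fun h => hb (h ▸ U.zero_mem)
  have hinf : U ⊓ span F {b} = ⊥ := by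
    rw [eq_bot_iff]
    rintro x ⟨hxU, hxb⟩
    obtain ⟨c, rfl⟩ := mem_span_singleton.mp hxb
    rcases eq_or_ne c 0 with rfl | hc
    · simp
    · exact absurd
        (by simpa [smul_smul, inv_mul_cancel₀ hc] using U.smul_mem c⁻¹ hxU : b ∈ U) hb
  have := Submodule.finrank_sup_add_finrank_inf_eq U (span F {b})
  rw [hinf, finrank_bot, finrank_span_singleton hb0] at this
  omega

lemma rank_char {W : Submodule F (Fin d → F)} {q : ℕ} (hq : 1 ≤ q) (hW : finrank F W = q - 1)
    (a b : Fin d → F) :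
    finrank F ↥((W ⊔ span F {a}) ⊔ span F {b}) = q + 1 ↔ a ∉ W ∧ b ∉ W ⊔ span F {a} := by
  constructor
  · intro h
    by_contra hcon
    push_neg at hcon
    rcases Classical.em (a ∈ W) with ha | ha
    · rw [sup_span_singleton_of_mem ha] at h
      rcases Classical.em (b ∈ W) with hb | hb
      · rw [sup_span_singleton_of_mem hb, hW] at h; omega
      · rw [finrank_sup_span_singleton_of_not_mem hb, hW] at h; omega
    · have hb := hcon ha
      rw [sup_span_singleton_of_mem hb, finrank_sup_span_singleton_of_not_mem ha, hW] at h
      omega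
  · rintro ⟨ha, hb⟩
    rw [finrank_sup_span_singleton_of_not_mem hb, finrank_sup_span_singleton_of_not_mem ha, hW]
    omega

lemma card_submodule [Fintype F] (U : Submodule F (Fin d → F)) :
    Nat.card U = Fintype.card F ^ finrank F U := by
  classical
  have : Fintype U := Fintype.ofFinite _
  rw [Nat.card_eq_fintype_card]
  exact card_eq_pow_finrank

lemma card_compl_submodule [Fintype F] (U : Submodule F (Fin d → F)) :
    Nat.card {v : Fin d → F // v ∉ U} = Fintype.card F ^ d - Fintype.card F ^ finrank F U := by
  classical
  rw [Nat.card_eq_fintype_card, Fintype.card_subtype_compl]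
  congr 1
  · rw [card_eq_pow_finrank (K := F) (V := Fin d → F), Module.finrank_fin_fun]
  · rw [← Nat.card_eq_fintype_card]
    exact card_submodule U

lemma card_coset [Fintype F] (W : Submodule F (Fin d → F)) (p : Fin d → F) :
    Nat.card {u : Fin d → F // u - p ∈ W} = Fintype.card F ^ finrank F W := by
  rw [← card_submodule W]
  exact Nat.card_congr
    ⟨fun u => ⟨u.1 - p, u.2⟩, fun w => ⟨p + w.1, by simpa using w.2⟩,
      fun u => by ext; simp, fun w => by ext; simp⟩

lemma card_compl_coset [Fintype F] (W : Submodule F (Fin d → F)) (p : Fin d → F) :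
    Nat.card {u : Fin d → F // ¬ (u - p ∈ W)}
      = Fintype.card F ^ d - Fintype.card F ^ finrank F W := by
  classical
  rw [Nat.card_eq_fintype_card, Fintype.card_subtype_compl]
  congr 1
  · rw [card_eq_pow_finrank (K := F) (V := Fin d → F), Module.finrank_fin_fun]
  · rw [← Nat.card_eq_fintype_card]
    exact card_coset W p

lemma real_ineq' (s X Y Z : ℝ) (hs0 : 0 < s) (hs : s ≤ 1/2) (hX1 : 1 ≤ X)
    (hZ1 : 1 ≤ Z) (hZY : Z ≤ Y) (hYs : Y ≤ X * s^2) :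
    (1 - s) * (X * (X - 1)) < (X - Z) * (X - Y) := by
  have hs2 : s^2 < 1 := by nlinarith
  have hXY : Y ≤ X := le_trans hYs (by nlinarith)
  have key2 : 1 - s ≤ (1 - s^2)^2 := by nlinarith
  have step1 : (1 - s) * (X * (X - 1)) < (1 - s) * X^2 := by nlinarith
  have step2 : (1 - s) * X^2 ≤ ((1 - s^2) * X)^2 := by nlinarith [sq_nonneg X]
  have step3 : ((1 - s^2) * X)^2 ≤ (X - Y)^2 := by
    have h1 : (1 - s^2) * X ≤ X - Y := by nlinarith
    have h2 : 0 ≤ (1 - s^2) * X := by nlinarith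
    nlinarith
  have step4 : (X - Y)^2 ≤ (X - Z) * (X - Y) := by nlinarith
  linarith

lemma real_ineq {c d q : ℕ} (hc : 2 ≤ c) (hd : q + 2 ≤ d) :
    (1 - (c:ℝ)⁻¹) * ((c:ℝ)^d * ((c:ℝ)^d - 1)) <
      ((c:ℝ)^d - (c:ℝ)^(q-1)) * ((c:ℝ)^d - (c:ℝ)^q) := by
  have hcR : (2:ℝ) ≤ (c:ℝ) := by exact_mod_cast hc
  have hc0 : (0:ℝ) < (c:ℝ) := by linarith
  have hc1 : (1:ℝ) ≤ (c:ℝ) := by linarith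
  have hs0 : 0 < (c:ℝ)⁻¹ := inv_pos.mpr hc0
  have hsc : (c:ℝ)⁻¹ * (c:ℝ) = 1 := inv_mul_cancel₀ (by linarith)
  have hs : (c:ℝ)⁻¹ ≤ 1/2 := by
    rw [inv_le_comm₀ (by linarith) (by norm_num)]
    simpa using hcR
  have hX1 : (1:ℝ) ≤ (c:ℝ)^d := one_le_pow₀ hc1
  have hZ1 : (1:ℝ) ≤ (c:ℝ)^(q-1) := one_le_pow₀ hc1
  have hZY : (c:ℝ)^(q-1) ≤ (c:ℝ)^q := pow_le_pow_right₀ hc1 (Nat.sub_le q 1)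
  have hYX : (c:ℝ)^q * (c:ℝ)^2 ≤ (c:ℝ)^d := by
    rw [← pow_add]
    exact pow_le_pow_right₀ hc1 hd
  have hYs : (c:ℝ)^q ≤ (c:ℝ)^d * ((c:ℝ)⁻¹)^2 := by
    have h2 : (c:ℝ)^q * (c:ℝ)^2 * ((c:ℝ)⁻¹)^2 ≤ (c:ℝ)^d * ((c:ℝ)⁻¹)^2 :=
      mul_le_mul_of_nonneg_right hYX (by positivity)
    calc (c:ℝ)^q = (c:ℝ)^q * ((c:ℝ) * (c:ℝ)⁻¹) * ((c:ℝ) * (c:ℝ)⁻¹) := by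
            rw [mul_comm (c:ℝ) (c:ℝ)⁻¹, hsc]; ring
      _ = (c:ℝ)^q * (c:ℝ)^2 * ((c:ℝ)⁻¹)^2 := by ring
      _ ≤ (c:ℝ)^d * ((c:ℝ)⁻¹)^2 := h2
  exact real_ineq' _ _ _ _ hs0 hs hX1 hZ1 hZY hYs

end MLSFD

open MLSFD Submodule Module in
/-- If `τ ⊆ F^d` is a finite set whose affine span has dimension `q - 1` and
`q + 1 < d`, then the fraction of lines `ℓ` of `F^d` for which the affine span
of `ℓ ∪ τ` has dimension exactly `q + 1` is greater than `1 - |F|⁻¹`. -/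
theorem most_lines_span_full_dimension (F : Type*) [Field F] [Fintype F]
    (d q : ℕ) (hq : 1 ≤ q) (hd : q + 1 < d)
    (τ : Set (Fin d → F)) (hτfin : τ.Finite) (hτne : τ.Nonempty)
    (hτdim : Module.finrank F (affineSpan F τ).direction = q - 1) :
    (1 - (Fintype.card F : ℝ)⁻¹) *
        (Nat.card {ℓ : Set (Fin d → F) // IsLine F d ℓ} : ℝ) <
      (Nat.card {ℓ : Set (Fin d → F) // IsLine F d ℓ ∧
        Module.finrank F (affineSpan F (ℓ ∪ τ)).direction = q + 1} : ℝ) := by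
  classical
  obtain ⟨p, hp⟩ := hτne
  rw [direction_affineSpan] at hτdim
  set c := Fintype.card F with hc_def
  have hc : 2 ≤ c := Fintype.one_lt_card
  set P : Set (Fin d → F) → Prop :=
    fun ℓ => Module.finrank F (affineSpan F (ℓ ∪ τ)).direction = q + 1 with hP_def
  have hPiff : ∀ u v : Fin d → F, P (lineOf u v) ↔
      (u - p ∉ vectorSpan F τ ∧ v ∉ vectorSpan F τ ⊔ span F {u - p}) := by
    intro u v
    show Module.finrank F (affineSpan F (lineOf u v ∪ τ)).direction = q + 1 ↔ _
    rw [direction_affineSpan, vectorSpan_line_union u v hp]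
    exact rank_char hq hτdim _ _
  set m := c * (c - 1) with hm_def
  have hm0 : 0 < m := Nat.mul_pos (by omega) (by omega)
  -- step 1 : all pairs vs all lines
  have step1 : Nat.card {x : (Fin d → F) × (Fin d → F) // x.2 ≠ 0}
      = Nat.card {ℓ : Set (Fin d → F) // IsLine F d ℓ} * m := by
    refine card_of_fibers
      (fun x => ⟨lineOf x.1.1 x.1.2, x.1.1, x.1.2, x.2, rfl⟩) m ?_
    rintro ⟨ℓ, u₀, v₀, hv₀, rfl⟩
    refine (Nat.card_congr ((Equiv.subtypeEquivRight (fun a => ?_)).trans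
      (flattenEquiv (fun x : (Fin d → F) × (Fin d → F) =>
        lineOf x.1 x.2 = lineOf u₀ v₀)))).trans (fiber_card hv₀)
    exact ⟨fun h => congrArg Subtype.val h, fun h => Subtype.ext h⟩
  -- step 2 : good pairs vs good lines
  have step2 : Nat.card {x : (Fin d → F) × (Fin d → F) // x.2 ≠ 0 ∧ P (lineOf x.1 x.2)}
      = Nat.card {ℓ : Set (Fin d → F) // IsLine F d ℓ ∧ P ℓ} * m := by
    refine card_of_fibers
      (fun x => ⟨lineOf x.1.1 x.1.2, ⟨x.1.1, x.1.2, x.2.1, rfl⟩, x.2.2⟩) m ?_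
    rintro ⟨ℓ, ⟨u₀, v₀, hv₀, rfl⟩, hPℓ⟩
    refine (Nat.card_congr (((Equiv.subtypeEquivRight (fun a => ?_)).trans
      (flattenEquiv (fun x : (Fin d → F) × (Fin d → F) =>
        lineOf x.1 x.2 = lineOf u₀ v₀))).trans
      (Equiv.subtypeEquivRight (fun x => ?_)))).trans (fiber_card (u₀ := u₀) hv₀)
    · exact ⟨fun h => congrArg Subtype.val h, fun h => Subtype.ext h⟩
    · constructor
      · rintro ⟨⟨h1, _⟩, h3⟩; exact ⟨h1, h3⟩
      · rintro ⟨h1, h3⟩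
        exact ⟨⟨h1, by rw [h3]; exact hPℓ⟩, h3⟩
  -- step 3 : counting good pairs
  have hfq : ∀ u : Fin d → F, u - p ∉ vectorSpan F τ →
      finrank F ↥(vectorSpan F τ ⊔ span F {u - p}) = q := by
    intro u hu
    rw [finrank_sup_span_singleton_of_not_mem hu, hτdim]
    omega
  have step3 : Nat.card {x : (Fin d → F) × (Fin d → F) // x.2 ≠ 0 ∧ P (lineOf x.1 x.2)}
      = (c ^ d - c ^ (q - 1)) * (c ^ d - c ^ q) := by
    rw [card_fibers_sum (fun x => x.1.1)]
    have hfib : ∀ u : Fin d → F,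
        Nat.card {a : {x : (Fin d → F) × (Fin d → F) // x.2 ≠ 0 ∧ P (lineOf x.1 x.2)} //
            a.1.1 = u}
          = if u - p ∈ vectorSpan F τ then 0 else c ^ d - c ^ q := by
      intro u
      have e2 : {a : {x : (Fin d → F) × (Fin d → F) // x.2 ≠ 0 ∧ P (lineOf x.1 x.2)} //
            a.1.1 = u}
          ≃ {v : Fin d → F // v ≠ 0 ∧ P (lineOf u v)} :=
        ⟨fun a => ⟨a.1.1.2, by
            obtain ⟨⟨⟨u', v⟩, hv, hPv⟩, h⟩ := a
            simp only at h
            subst h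
            exact ⟨hv, hPv⟩⟩,
          fun v => ⟨⟨(u, v.1), v.2.1, v.2.2⟩, rfl⟩,
          fun a => by
            obtain ⟨⟨⟨u', v⟩, hv, hPv⟩, h⟩ := a
            simp only at h
            subst h
            rfl,
          fun v => rfl⟩
      rw [Nat.card_congr e2]
      by_cases hu : u - p ∈ vectorSpan F τ
      · rw [if_pos hu]
        have : IsEmpty {v : Fin d → F // v ≠ 0 ∧ P (lineOf u v)} :=
          ⟨fun v => ((hPiff u v.1).mp v.2.2).1 hu⟩
        simp [Nat.card_of_isEmpty]
      · rw [if_neg hu]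
        have e3 : {v : Fin d → F // v ≠ 0 ∧ P (lineOf u v)}
            ≃ {v : Fin d → F // v ∉ vectorSpan F τ ⊔ span F {u - p}} := by
          refine Equiv.subtypeEquivRight (fun v => ?_)
          rw [hPiff u v]
          constructor
          · rintro ⟨_, _, h⟩; exact h
          · intro h
            exact ⟨fun h0 => h (h0 ▸ Submodule.zero_mem _), hu, h⟩
        rw [Nat.card_congr e3, card_compl_submodule, hfq u hu]
    rw [Finset.sum_congr rfl fun u _ => hfib u]
    rw [Finset.sum_ite, Finset.sum_const, Finset.sum_const, smul_eq_mul, smul_eq_mul,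
      Nat.mul_zero, Nat.zero_add]
    congr 1
    rw [← Fintype.card_subtype, ← Nat.card_eq_fintype_card, card_compl_coset, hτdim]
  -- step 4 : counting all pairs
  have step4 : Nat.card {x : (Fin d → F) × (Fin d → F) // x.2 ≠ 0}
      = c ^ d * (c ^ d - 1) := by
    have e4 : {x : (Fin d → F) × (Fin d → F) // x.2 ≠ 0}
        ≃ (Fin d → F) × {v : Fin d → F // v ≠ 0} :=
      ⟨fun x => (x.1.1, ⟨x.1.2, x.2⟩), fun y => ⟨(y.1, y.2.1), y.2.2⟩,
        fun _ => rfl, fun _ => rfl⟩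
    rw [Nat.card_congr e4, Nat.card_prod]
    congr 1
    · rw [Nat.card_eq_fintype_card, card_eq_pow_finrank (K := F) (V := Fin d → F),
        Module.finrank_fin_fun]
    · rw [Nat.card_eq_fintype_card, Fintype.card_subtype_compl,
        Fintype.card_subtype_eq (0 : Fin d → F)]
      congr 1
      rw [card_eq_pow_finrank (K := F) (V := Fin d → F), Module.finrank_fin_fun]
  -- assemble
  have key : (1 - (c:ℝ)⁻¹) *
      (Nat.card {ℓ : Set (Fin d → F) // IsLine F d ℓ} : ℝ) <
      (Nat.card {ℓ : Set (Fin d → F) // IsLine F d ℓ ∧ P ℓ} : ℝ) := by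
    set L := Nat.card {ℓ : Set (Fin d → F) // IsLine F d ℓ} with hL_def
    set G := Nat.card {ℓ : Set (Fin d → F) // IsLine F d ℓ ∧ P ℓ} with hG_def
    have hLm : L * m = c ^ d * (c ^ d - 1) := by rw [← step1, step4]
    have hGm : G * m = (c ^ d - c ^ (q - 1)) * (c ^ d - c ^ q) := by rw [← step2, step3]
    rw [← mul_lt_mul_iff_of_pos_right (show (0:ℝ) < (m:ℝ) by exact_mod_cast hm0)]
    have hcast1 : (L : ℝ) * (m : ℝ) = ((L * m : ℕ) : ℝ) := by push_cast; ring
    have hcast2 : (G : ℝ) * (m : ℝ) = ((G * m : ℕ) : ℝ) := by push_cast; ring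
    rw [mul_assoc, hcast1, hcast2, hLm, hGm]
    have h1 : (1:ℕ) ≤ c ^ d := Nat.one_le_pow _ _ (by omega)
    have h2 : c ^ (q - 1) ≤ c ^ d := Nat.pow_le_pow_right (by omega) (by omega)
    have h3 : c ^ q ≤ c ^ d := Nat.pow_le_pow_right (by omega) (by omega)
    push_cast [Nat.cast_sub h1, Nat.cast_sub h2, Nat.cast_sub h3]
    exact real_ineq hc (by omega)
  exact key
end

section
/- Let S ⊆ F^d be an affine subspace of dimension q+1 and τ ⊆ S a set whose affine span has dimension q-1. Then among all lines contained in S, the fraction of lines ℓ with affine span of ℓ ∪ τ equal to S is greater than 1 - 2|F|^{-1}. -/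
open Submodule Set

section helpers

def sigmaFiberAux {α β : Type*} (f : α → β) : (Σ b : β, {a // f a = b}) ≃ α where
  toFun x := x.2.1
  invFun a := ⟨f a, a, rfl⟩
  left_inv := by rintro ⟨b, a, rfl⟩; rfl
  right_inv a := rfl

lemma card_eq_sum_fibers {α β : Type*} [Finite α] [Finite β] (f : α → β) :
    Nat.card α = ∑ᶠ b : β, Nat.card {a // f a = b} := by
  classical
  cases nonempty_fintype α
  cases nonempty_fintype β
  haveI : ∀ b : β, Fintype {a // f a = b} := fun b => Fintype.ofFinite _
  rw [← Nat.card_congr (sigmaFiberAux f), Nat.card_eq_fintype_card, Fintype.card_sigma,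
    finsum_eq_sum_of_fintype]
  exact Finset.sum_congr rfl fun b _ => (Nat.card_eq_fintype_card).symm

lemma card_eq_card_mul_of_fibers {α β : Type*} [Finite α] [Finite β] (f : α → β) (k : ℕ)
    (h : ∀ b, Nat.card {a // f a = b} = k) :
    Nat.card α = Nat.card β * k := by
  classical
  cases nonempty_fintype α
  cases nonempty_fintype β
  rw [card_eq_sum_fibers f, finsum_eq_sum_of_fintype]
  calc ∑ b : β, Nat.card {a // f a = b} = ∑ _b : β, k := Finset.sum_congr rfl fun b _ => h b
  _ = Nat.card β * k := by simp [Nat.card_eq_fintype_card, mul_comm]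

lemma card_le_card_mul_of_fibers {α β : Type*} [Finite α] [Finite β] (f : α → β) (k : ℕ)
    (h : ∀ b, Nat.card {a // f a = b} ≤ k) :
    Nat.card α ≤ Nat.card β * k := by
  classical
  cases nonempty_fintype α
  cases nonempty_fintype β
  rw [card_eq_sum_fibers f, finsum_eq_sum_of_fintype]
  calc ∑ b : β, Nat.card {a // f a = b} ≤ ∑ _b : β, k := Finset.sum_le_sum fun b _ => h b
  _ = Nat.card β * k := by simp [Nat.card_eq_fintype_card, mul_comm]

end helpers

section twodim

variable {F : Type*} [Field F] [Fintype F]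
variable {V : Type*} [AddCommGroup V] [Module F V] [Finite V]

omit [Fintype F] [Finite V] in
lemma span_singleton_ne_top (h2 : Module.finrank F V = 2) (b : V) :
    span F {b} ≠ ⊤ := by
  intro htop
  have hle : Module.finrank F (span F {b}) ≤ 1 := by
    simpa using finrank_span_le_card ({b} : Set V)
  rw [htop, finrank_top] at hle
  omega

omit [Fintype F] in
lemma span_pair_ne_top_iff (h2 : Module.finrank F V = 2) {a : V} (ha : a ≠ 0) (b : V) :
    span F {a, b} ≠ ⊤ ↔ b ∈ span F {a} := by
  constructor
  · intro h
    by_contra hb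
    apply h
    have hlt : span F {a} < span F {a, b} := by
      refine lt_of_le_of_ne (span_mono (by simp)) fun heq => hb ?_
      rw [heq]
      exact subset_span (by simp)
    have h1 : Module.finrank F (span F {a}) = 1 := finrank_span_singleton ha
    have h2' := Submodule.finrank_lt_finrank_of_lt hlt
    apply Submodule.eq_top_of_finrank_eq
    have hle := Submodule.finrank_le (span F {a, b})
    omega
  · intro hb h
    have : span F ({a, b} : Set V) = span F {a} := by
      rw [Set.pair_comm]
      exact Submodule.span_insert_eq_span hb
    rw [this] at h
    exact span_singleton_ne_top h2 a h

lemma card_span_singleton {a : V} (ha : a ≠ 0) :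
    Nat.card (span F {a}) = Fintype.card F := by
  cases nonempty_fintype V
  haveI : Fintype (span F {a}) := Fintype.ofFinite _
  rw [Nat.card_eq_fintype_card, Module.card_eq_pow_finrank (K := F), finrank_span_singleton ha, pow_one]

def depFiberEquiv (a : V) :
    {y : {y : V × V // span F {y.1, y.2} ≠ ⊤} // y.1.1 = a} ≃ {b : V // span F {a, b} ≠ ⊤} where
  toFun x := ⟨x.1.1.2, by have h := x.1.2; rwa [x.2] at h⟩
  invFun b := ⟨⟨(a, b.1), b.2⟩, rfl⟩
  left_inv := by rintro ⟨⟨⟨a', b⟩, h⟩, rfl⟩; rfl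
  right_inv b := rfl

lemma card_dep_pairs (h2 : Module.finrank F V = 2) :
    Nat.card {y : V × V // span F {y.1, y.2} ≠ ⊤} =
      Fintype.card F ^ 2 + (Fintype.card F ^ 2 - 1) * Fintype.card F := by
  classical
  cases nonempty_fintype V
  have hV : Fintype.card V = Fintype.card F ^ 2 := by
    rw [Module.card_eq_pow_finrank (K := F), h2]
  rw [card_eq_sum_fibers (fun y : {y : V × V // span F {y.1, y.2} ≠ ⊤} => y.1.1)]
  rw [finsum_eq_sum_of_fintype]
  have hfib : ∀ a : V, Nat.card {y : {y : V × V // span F {y.1, y.2} ≠ ⊤} // y.1.1 = a} =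
      if a = 0 then Fintype.card F ^ 2 else Fintype.card F := by
    intro a
    rw [Nat.card_congr (depFiberEquiv a)]
    by_cases ha : a = 0
    · subst ha
      simp only [if_true]
      have : ∀ b : V, span F ({(0 : V), b} : Set V) ≠ ⊤ := by
        intro b
        have : ({(0 : V), b} : Set V) = insert 0 {b} := rfl
        rw [this, Submodule.span_insert_zero]
        exact span_singleton_ne_top h2 b
      rw [Nat.card_congr (Equiv.subtypeUnivEquiv this), Nat.card_eq_fintype_card, hV]
    · rw [if_neg ha]
      have : ∀ b : V, (span F ({a, b} : Set V) ≠ ⊤) ↔ b ∈ span F {a} :=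
        fun b => span_pair_ne_top_iff h2 ha b
      rw [Nat.card_congr (Equiv.subtypeEquivRight this)]
      exact card_span_singleton ha
  rw [Finset.sum_congr rfl fun a _ => hfib a]
  rw [← Finset.add_sum_erase Finset.univ _ (Finset.mem_univ (0:V)), if_pos rfl]
  have hsum : ∑ a ∈ Finset.univ.erase (0:V),
      (if a = 0 then Fintype.card F ^ 2 else Fintype.card F) =
      (Fintype.card V - 1) * Fintype.card F := by
    rw [Finset.sum_congr rfl (fun a ha => if_neg (Finset.ne_of_mem_erase ha)),
      Finset.sum_const, Finset.card_erase_of_mem (Finset.mem_univ _), Finset.card_univ,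
      smul_eq_mul]
  rw [hsum, hV]

omit [Fintype F] [Finite V] in
lemma card_fiber_mkQ (W : Submodule F V) (a : V ⧸ W) :
    Nat.card {z : V // W.mkQ z = a} = Nat.card W := by
  obtain ⟨z₀, hz₀⟩ := Submodule.mkQ_surjective W a
  refine Nat.card_congr ⟨fun z => ⟨z.1 - z₀, ?_⟩, fun w => ⟨z₀ + w.1, ?_⟩, ?_, ?_⟩
  · rw [← Submodule.Quotient.mk_eq_zero]
    have : W.mkQ (z.1 - z₀) = W.mkQ z.1 - W.mkQ z₀ := map_sub _ _ _
    show Submodule.Quotient.mk (z.1 - z₀) = 0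
    rw [show (Submodule.Quotient.mk (z.1 - z₀) : V ⧸ W) = W.mkQ (z.1 - z₀) from rfl, this,
      z.2, hz₀, sub_self]
  · rw [map_add, hz₀, show W.mkQ w.1 = 0 from (Submodule.Quotient.mk_eq_zero W).2 w.2, add_zero]
  · intro z; ext; simp
  · intro w; ext; simp

end twodim

section lines

variable {F : Type*} [Field F] {d : ℕ}

/-- The line through `u` with direction `v`. -/
def lineThrough (u v : Fin d → F) : Set (Fin d → F) :=
  Set.range fun t : F => u + t • v

lemma mem_lineThrough {x u v : Fin d → F} : x ∈ lineThrough u v ↔ ∃ t : F, x = u + t • v := by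
  constructor
  · rintro ⟨t, rfl⟩; exact ⟨t, rfl⟩
  · rintro ⟨t, rfl⟩; exact ⟨t, rfl⟩

lemma lineThrough_eq_iff {u v u₀ v₀ : Fin d → F} (hv : v ≠ 0) (hv₀ : v₀ ≠ 0) :
    lineThrough u v = lineThrough u₀ v₀ ↔
      (u ∈ lineThrough u₀ v₀ ∧ ∃ c : F, c ≠ 0 ∧ v = c • v₀) := by
  constructor
  · intro h
    have hu : u ∈ lineThrough u₀ v₀ := h ▸ ⟨0, by simp⟩
    have huv : u + v ∈ lineThrough u₀ v₀ := h ▸ ⟨1, by simp⟩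
    obtain ⟨a, ha⟩ := mem_lineThrough.1 hu
    obtain ⟨b, hb⟩ := mem_lineThrough.1 huv
    have hvba : v = (b - a) • v₀ := by
      have : v = (u + v) - u := by abel
      rw [this, hb, ha, sub_smul]; abel
    refine ⟨hu, b - a, ?_, hvba⟩
    intro h0
    rw [h0, zero_smul] at hvba
    exact hv hvba
  · rintro ⟨hu, c, hc, rfl⟩
    obtain ⟨a, ha⟩ := mem_lineThrough.1 hu
    ext x
    rw [mem_lineThrough, mem_lineThrough]
    constructor
    · rintro ⟨t, rfl⟩
      refine ⟨a + t * c, ?_⟩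
      rw [ha, add_smul, mul_smul]
      abel
    · rintro ⟨s, rfl⟩
      refine ⟨(s - a) / c, ?_⟩
      rw [ha, smul_smul, div_mul_cancel₀ _ hc, sub_smul]
      abel

lemma card_lineThrough [Fintype F] {u v : Fin d → F} (hv : v ≠ 0) :
    Nat.card (lineThrough u v) = Fintype.card F := by
  have hinj : Function.Injective fun t : F => u + t • v := by
    intro s t h
    have h' : s • v = t • v := by simpa using h
    exact smul_left_injective F hv h'
  rw [← Nat.card_eq_fintype_card]
  exact (Nat.card_congr (Equiv.ofBijective (fun t : F => (⟨u + t • v, t, rfl⟩ : lineThrough u v))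
    ⟨fun s t h => hinj (congrArg Subtype.val h), fun ⟨x, t, ht⟩ => ⟨t, Subtype.ext ht⟩⟩)).symm

lemma span_image_lineThrough (u v t₀ : Fin d → F) :
    Submodule.span F ((· -ᵥ t₀) '' lineThrough u v) = Submodule.span F {u - t₀, v} := by
  apply le_antisymm
  · rw [Submodule.span_le]
    rintro x ⟨y, ⟨t, rfl⟩, rfl⟩
    show (u + t • v) -ᵥ t₀ ∈ (span F {u - t₀, v} : Set (Fin d → F))
    have : (u + t • v : Fin d → F) -ᵥ t₀ = (u - t₀) + t • v := by
      simp [vsub_eq_sub]; abel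
    rw [this]
    exact add_mem (subset_span (by simp)) (smul_mem _ _ (subset_span (by simp)))
  · rw [Submodule.span_le]
    intro x hx
    simp only [Set.mem_insert_iff, Set.mem_singleton_iff] at hx
    rcases hx with rfl | h
    · exact subset_span ⟨u, ⟨0, by simp⟩, by simp [vsub_eq_sub]⟩
    · rw [h]
      have h1 : (u + (1:F) • v) -ᵥ t₀ ∈ span F ((· -ᵥ t₀) '' lineThrough u v) :=
        subset_span ⟨_, ⟨1, rfl⟩, rfl⟩
      have h0 : u -ᵥ t₀ ∈ span F ((· -ᵥ t₀) '' lineThrough u v) :=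
        subset_span ⟨u, ⟨0, by simp⟩, rfl⟩
      have h2 := sub_mem h1 h0
      have hv : ((u + (1:F) • v) -ᵥ t₀) - (u -ᵥ t₀) = v := by
        simp [vsub_eq_sub]
      rwa [hv] at h2

lemma good_iff (S : AffineSubspace F (Fin d → F)) (τ : Set (Fin d → F))
    (hτS : τ ⊆ (S : Set (Fin d → F)))
    {t₀ : Fin d → F} (ht₀ : t₀ ∈ τ) {u v : Fin d → F} (hu : u ∈ S) (hv : v ∈ S.direction)
    (hw : u - t₀ ∈ S.direction) :
    affineSpan F (lineThrough u v ∪ τ) = S ↔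
      span F {(comap S.direction.subtype (affineSpan F τ).direction).mkQ ⟨u - t₀, hw⟩,
              (comap S.direction.subtype (affineSpan F τ).direction).mkQ ⟨v, hv⟩} = ⊤ := by
  set D := S.direction with hD
  set T := (affineSpan F τ).direction with hT
  set T' : Submodule F D := comap D.subtype T with hT'
  have hTD : T ≤ D := AffineSubspace.direction_le (affineSpan_le.2 hτS)
  have hℓS : lineThrough u v ⊆ (S : Set (Fin d → F)) := by
    rintro x ⟨t, rfl⟩
    show u + t • v ∈ S
    have := AffineSubspace.vadd_mem_of_mem_direction (Submodule.smul_mem D t hv) hu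
    simpa [add_comm] using this
  have hsub : affineSpan F (lineThrough u v ∪ τ) ≤ S :=
    affineSpan_le.2 (Set.union_subset hℓS hτS)
  have ht₀A : t₀ ∈ affineSpan F (lineThrough u v ∪ τ) :=
    subset_affineSpan F _ (Or.inr ht₀)
  have step1 : affineSpan F (lineThrough u v ∪ τ) = S ↔
      (affineSpan F (lineThrough u v ∪ τ)).direction = D := by
    constructor
    · rintro h; rw [h]
    · intro h
      exact AffineSubspace.ext_of_direction_eq h ⟨t₀, ht₀A, hτS ht₀⟩
  have step2 : (affineSpan F (lineThrough u v ∪ τ)).direction =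
      span F {u - t₀, v} ⊔ T := by
    rw [direction_affineSpan,
      vectorSpan_eq_span_vsub_set_right F (Set.mem_union_right _ ht₀),
      Set.image_union, Submodule.span_union, span_image_lineThrough, hT,
      direction_affineSpan, vectorSpan_eq_span_vsub_set_right F ht₀]
  have hmap : Submodule.map D.subtype
      (span F {(⟨u - t₀, hw⟩ : D), ⟨v, hv⟩} ⊔ T') = span F {u - t₀, v} ⊔ T := by
    rw [Submodule.map_sup, Submodule.map_span, Set.image_pair, hT',
      Submodule.map_comap_subtype, inf_eq_right.mpr hTD]
    rfl
  have step3 : span F {u - t₀, v} ⊔ T = D ↔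
      span F {(⟨u - t₀, hw⟩ : D), ⟨v, hv⟩} ⊔ T' = ⊤ := by
    constructor
    · intro h
      apply Submodule.map_injective_of_injective D.injective_subtype
      rw [hmap, h, Submodule.map_subtype_top]
    · intro h
      rw [← hmap, h, Submodule.map_subtype_top]
  have step4 : span F {(⟨u - t₀, hw⟩ : D), ⟨v, hv⟩} ⊔ T' = ⊤ ↔
      span F {T'.mkQ ⟨u - t₀, hw⟩, T'.mkQ ⟨v, hv⟩} = ⊤ := by
    have hms : Submodule.map T'.mkQ (span F {(⟨u - t₀, hw⟩ : D), ⟨v, hv⟩}) =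
        span F {T'.mkQ ⟨u - t₀, hw⟩, T'.mkQ ⟨v, hv⟩} := by
      rw [Submodule.map_span, Set.image_pair]
    constructor
    · intro h
      have h2 := congrArg (Submodule.map T'.mkQ) h
      rw [Submodule.map_sup, Submodule.map_top, Submodule.range_mkQ] at h2
      have h3 : Submodule.map T'.mkQ T' = ⊥ := by
        rw [eq_bot_iff]
        rintro x ⟨y, hy, rfl⟩
        simpa using (Submodule.Quotient.mk_eq_zero T').2 hy
      rw [h3, sup_bot_eq] at h2
      rw [← hms]
      exact h2
    · intro h
      rw [← hms] at h
      have := congrArg (Submodule.comap T'.mkQ) h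
      rw [Submodule.comap_map_mkQ, Submodule.comap_top] at this
      rw [sup_comm] at this
      exact this
  rw [step1, step2, step3, step4]

variable [Fintype F]

lemma isLine_lineThrough {u v : Fin d → F} (hv : v ≠ 0) : IsLine F d (lineThrough u v) :=
  ⟨u, v, hv, rfl⟩

lemma lineThrough_subset {S : AffineSubspace F (Fin d → F)} {u v : Fin d → F}
    (hu : u ∈ S) (hv : v ∈ S.direction) :
    lineThrough u v ⊆ (S : Set (Fin d → F)) := by
  rintro x ⟨t, rfl⟩
  show u + t • v ∈ S
  have := AffineSubspace.vadd_mem_of_mem_direction (Submodule.smul_mem S.direction t hv) hu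
  simpa [add_comm] using this

lemma exists_rep {S : AffineSubspace F (Fin d → F)} {ℓ : Set (Fin d → F)}
    (h1 : IsLine F d ℓ) (h2 : ℓ ⊆ (S : Set (Fin d → F))) :
    ∃ u₀ v₀ : Fin d → F, u₀ ∈ S ∧ v₀ ∈ S.direction ∧ v₀ ≠ 0 ∧ ℓ = lineThrough u₀ v₀ := by
  obtain ⟨u₀, v₀, hv₀, rfl⟩ := h1
  have hu₀ : u₀ ∈ S := h2 ⟨0, by simp⟩
  have huv : u₀ + (1:F) • v₀ ∈ S := h2 ⟨1, rfl⟩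
  have hv₀S : v₀ ∈ S.direction := by
    have := AffineSubspace.vsub_mem_direction huv hu₀
    simpa [vsub_eq_sub] using this
  exact ⟨u₀, v₀, hu₀, hv₀S, hv₀, rfl⟩

lemma pairs_card (S : AffineSubspace F (Fin d → F)) (P : Set (Fin d → F) → Prop) :
    Nat.card {x : (Fin d → F) × (Fin d → F) //
        (x.1 ∈ S ∧ x.2 ∈ S.direction ∧ x.2 ≠ 0) ∧ P (lineThrough x.1 x.2)} =
      Nat.card {ℓ : Set (Fin d → F) // (IsLine F d ℓ ∧ ℓ ⊆ (S : Set (Fin d → F))) ∧ P ℓ} *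
        (Fintype.card F * (Fintype.card F - 1)) := by
  classical
  set A := {x : (Fin d → F) × (Fin d → F) //
        (x.1 ∈ S ∧ x.2 ∈ S.direction ∧ x.2 ≠ 0) ∧ P (lineThrough x.1 x.2)} with hA
  set B := {ℓ : Set (Fin d → F) // (IsLine F d ℓ ∧ ℓ ⊆ (S : Set (Fin d → F))) ∧ P ℓ} with hB
  let f : A → B := fun x =>
    ⟨lineThrough x.1.1 x.1.2,
      ⟨⟨isLine_lineThrough x.2.1.2.2, lineThrough_subset x.2.1.1 x.2.1.2.1⟩, x.2.2⟩⟩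
  refine card_eq_card_mul_of_fibers f _ fun ℓ₀ => ?_
  obtain ⟨u₀, v₀, hu₀, hv₀S, hv₀, hℓ⟩ := exists_rep ℓ₀.2.1.1 ℓ₀.2.1.2
  have key : ∀ y : lineThrough u₀ v₀, ∀ c : {c : F // c ≠ 0},
      ((y.1, c.1 • v₀) : (Fin d → F) × (Fin d → F)).1 ∈ S ∧ c.1 • v₀ ∈ S.direction ∧
        c.1 • v₀ ≠ 0 := by
    intro y c
    refine ⟨?_, Submodule.smul_mem _ _ hv₀S, smul_ne_zero c.2 hv₀⟩
    apply ℓ₀.2.1.2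
    rw [hℓ]
    exact y.2
  have lineeq : ∀ y : lineThrough u₀ v₀, ∀ c : {c : F // c ≠ 0},
      lineThrough y.1 (c.1 • v₀) = ℓ₀.1 := by
    intro y c
    rw [hℓ]
    exact (lineThrough_eq_iff (smul_ne_zero c.2 hv₀) hv₀).2 ⟨y.2, c.1, c.2, rfl⟩
  let g : lineThrough u₀ v₀ × {c : F // c ≠ 0} → {a : A // f a = ℓ₀} := fun yc =>
    ⟨⟨(yc.1.1, yc.2.1 • v₀), ⟨key yc.1 yc.2, by rw [lineeq yc.1 yc.2]; exact ℓ₀.2.2⟩⟩,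
      Subtype.ext (lineeq yc.1 yc.2)⟩
  have hgbij : Function.Bijective g := by
    constructor
    · rintro ⟨y, c⟩ ⟨y', c'⟩ hgg
      have h1 : (y.1, c.1 • v₀) = (y'.1, c'.1 • v₀) := congrArg (fun z => z.1.1) hgg
      have h2 : y.1 = y'.1 := congrArg Prod.fst h1
      have h3 : c.1 • v₀ = c'.1 • v₀ := congrArg Prod.snd h1
      have h4 : c.1 = c'.1 := smul_left_injective F hv₀ h3
      exact Prod.ext (Subtype.ext h2) (Subtype.ext h4)
    · rintro ⟨⟨⟨u, v⟩, ⟨⟨hu, hvS, hvne⟩, hP⟩⟩, hfx⟩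
      have hle : lineThrough u v = lineThrough u₀ v₀ := by
        have := congrArg Subtype.val hfx
        simpa [hℓ] using this
      obtain ⟨hmem, c, hc, hvc⟩ := (lineThrough_eq_iff hvne hv₀).1 hle
      refine ⟨(⟨u, hmem⟩, ⟨c, hc⟩), ?_⟩
      apply Subtype.ext
      apply Subtype.ext
      show ((u, c • v₀) : (Fin d → F) × (Fin d → F)) = (u, v)
      rw [← hvc]
  rw [← Nat.card_congr (Equiv.ofBijective g hgbij), Nat.card_prod,
    card_lineThrough hv₀]
  congr 1
  rw [Nat.card_eq_fintype_card, Fintype.card_subtype_compl]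
  simp

end lines

set_option maxHeartbeats 1000000 in
set_option synthInstance.maxHeartbeats 400000 in
/-- If `S ⊆ F^d` is an affine subspace of dimension `q + 1` and `τ ⊆ S` has
affine span of dimension `q - 1`, then among the lines contained in `S`, the
fraction of lines `ℓ` whose union with `τ` affinely spans all of `S` is
greater than `1 - 2·|F|⁻¹`. -/
theorem most_lines_in_subspace_span (F : Type*) [Field F] [Fintype F]
    (d q : ℕ) (hq : 1 ≤ q)
    (S : AffineSubspace F (Fin d → F))
    (hS : Module.finrank F S.direction = q + 1)
    (τ : Set (Fin d → F)) (hτS : τ ⊆ (S : Set (Fin d → F)))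
    (hτfin : τ.Finite) (hτne : τ.Nonempty)
    (hτdim : Module.finrank F (affineSpan F τ).direction = q - 1) :
    (1 - 2 * (Fintype.card F : ℝ)⁻¹) *
        (Nat.card {ℓ : Set (Fin d → F) //
          IsLine F d ℓ ∧ ℓ ⊆ (S : Set (Fin d → F))} : ℝ) <
      (Nat.card {ℓ : Set (Fin d → F) //
        IsLine F d ℓ ∧ ℓ ⊆ (S : Set (Fin d → F)) ∧
          affineSpan F (ℓ ∪ τ) = S} : ℝ) := by
  classical
  obtain ⟨t₀, ht₀⟩ := hτne
  have ht₀S : t₀ ∈ S := hτS ht₀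
  set p := Fintype.card F with hp
  have hp2 : 2 ≤ p := Fintype.one_lt_card
  set D := S.direction with hDdef
  set T := (affineSpan F τ).direction with hTdef
  have hTD : T ≤ D := AffineSubspace.direction_le (affineSpan_le.2 hτS)
  set T' : Submodule F D := comap D.subtype T with hT'def
  set m := q - 1 with hm
  have hD : Module.finrank F D = m + 2 := by rw [hS]; omega
  have hT'rank : Module.finrank F T' = m := by
    rw [(Submodule.comapSubtypeEquivOfLe hTD).finrank_eq]
    exact hτdim
  have hQ : Module.finrank F (D ⧸ T') = 2 := by
    have h := Submodule.finrank_quotient_add_finrank T'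
    omega
  -- membership helper
  have hwmem : ∀ u : Fin d → F, u ∈ S → u - t₀ ∈ D := by
    intro u hu
    have := AffineSubspace.vsub_mem_direction hu ht₀S
    simpa [vsub_eq_sub] using this
  -- cardinality of the coset fibers
  have hcoset : ∀ a : D ⧸ T', Nat.card {z : D // T'.mkQ z = a} = p ^ m := by
    intro a
    rw [card_fiber_mkQ]
    haveI : Fintype T' := Fintype.ofFinite _
    rw [Nat.card_eq_fintype_card, Module.card_eq_pow_finrank (K := F), hT'rank]
  -- total pair count
  have htotal : Nat.card {x : (Fin d → F) × (Fin d → F) //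
      (x.1 ∈ S ∧ x.2 ∈ D ∧ x.2 ≠ 0) ∧ True} = p ^ (m + 2) * (p ^ (m + 2) - 1) := by
    haveI : Fintype D := Fintype.ofFinite _
    have hcardD : Nat.card D = p ^ (m + 2) := by
      rw [Nat.card_eq_fintype_card, Module.card_eq_pow_finrank (K := F), hD]
    have e : {x : (Fin d → F) × (Fin d → F) // (x.1 ∈ S ∧ x.2 ∈ D ∧ x.2 ≠ 0) ∧ True} ≃
        {u : Fin d → F // u ∈ S} × {v : D // v ≠ 0} :=
      { toFun := fun x => (⟨x.1.1, x.2.1.1⟩, ⟨⟨x.1.2, x.2.1.2.1⟩, by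
          simp only [ne_eq, Submodule.mk_eq_zero]
          exact x.2.1.2.2⟩)
        invFun := fun y => ⟨(y.1.1, y.2.1.1), ⟨⟨y.1.2, y.2.1.2,
          fun h0 => y.2.2 (Subtype.ext h0)⟩, trivial⟩⟩
        left_inv := fun x => rfl
        right_inv := fun y => rfl }
    have eS : {u : Fin d → F // u ∈ S} ≃ D :=
      { toFun := fun u => ⟨u.1 - t₀, hwmem u.1 u.2⟩
        invFun := fun w => ⟨t₀ + w.1, by
          have := AffineSubspace.vadd_mem_of_mem_direction w.2 ht₀S
          simpa [add_comm] using this⟩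
        left_inv := fun u => by ext; simp
        right_inv := fun w => by ext; simp }
    rw [Nat.card_congr e, Nat.card_prod, Nat.card_congr eS, hcardD]
    congr 1
    rw [Nat.card_eq_fintype_card, Fintype.card_subtype_compl, ← hcardD,
      Nat.card_eq_fintype_card]
    simp
  -- partition
  have hsplit : Nat.card {x : (Fin d → F) × (Fin d → F) //
        (x.1 ∈ S ∧ x.2 ∈ D ∧ x.2 ≠ 0) ∧ True} =
      Nat.card {x : (Fin d → F) × (Fin d → F) //
        (x.1 ∈ S ∧ x.2 ∈ D ∧ x.2 ≠ 0) ∧ affineSpan F (lineThrough x.1 x.2 ∪ τ) = S} +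
      Nat.card {x : (Fin d → F) × (Fin d → F) //
        (x.1 ∈ S ∧ x.2 ∈ D ∧ x.2 ≠ 0) ∧ ¬ affineSpan F (lineThrough x.1 x.2 ∪ τ) = S} := by
    set P0 : (Fin d → F) × (Fin d → F) → Prop := fun x => x.1 ∈ S ∧ x.2 ∈ D ∧ x.2 ≠ 0 with hP0
    set G : (Fin d → F) × (Fin d → F) → Prop :=
      fun x => affineSpan F (lineThrough x.1 x.2 ∪ τ) = S with hG
    have e0 : {x : (Fin d → F) × (Fin d → F) // P0 x ∧ True} ≃ {x // P0 x} :=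
      Equiv.subtypeEquivRight fun x => by tauto
    have e1 := (Equiv.sumCompl (fun y : {x // P0 x} => G y.1)).symm
    have e2 := Equiv.subtypeSubtypeEquivSubtypeInter P0 G
    have e3 := Equiv.subtypeSubtypeEquivSubtypeInter P0 (fun x => ¬ G x)
    calc Nat.card {x : (Fin d → F) × (Fin d → F) // P0 x ∧ True}
        = Nat.card ({y : {x // P0 x} // G y.1} ⊕ {y : {x // P0 x} // ¬ G y.1}) :=
          Nat.card_congr (e0.trans e1)
      _ = Nat.card {y : {x // P0 x} // G y.1} + Nat.card {y : {x // P0 x} // ¬ G y.1} :=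
          Nat.card_sum
      _ = Nat.card {x // P0 x ∧ G x} + Nat.card {x // P0 x ∧ ¬ G x} := by
          rw [Nat.card_congr e2, Nat.card_congr e3]
  -- bad bound
  have hbad : Nat.card {x : (Fin d → F) × (Fin d → F) //
        (x.1 ∈ S ∧ x.2 ∈ D ∧ x.2 ≠ 0) ∧ ¬ affineSpan F (lineThrough x.1 x.2 ∪ τ) = S} ≤
      (p ^ 2 + (p ^ 2 - 1) * p) * (p ^ m * p ^ m) := by
    set Bad := {x : (Fin d → F) × (Fin d → F) //
        (x.1 ∈ S ∧ x.2 ∈ D ∧ x.2 ≠ 0) ∧ ¬ affineSpan F (lineThrough x.1 x.2 ∪ τ) = S}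
      with hBad
    let φ : Bad → {y : (D ⧸ T') × (D ⧸ T') // span F {y.1, y.2} ≠ ⊤} := fun x =>
      ⟨(T'.mkQ ⟨x.1.1 - t₀, hwmem _ x.2.1.1⟩, T'.mkQ ⟨x.1.2, x.2.1.2.1⟩),
        fun htop => x.2.2
          ((good_iff S τ hτS ht₀ x.2.1.1 x.2.1.2.1 (hwmem _ x.2.1.1)).2 htop)⟩
    have hfib : ∀ y, Nat.card {x : Bad // φ x = y} ≤ p ^ m * p ^ m := by
      intro y
      let ψ : {x : Bad // φ x = y} →
          {z : D // T'.mkQ z = y.1.1} × {z : D // T'.mkQ z = y.1.2} := fun x =>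
        (⟨⟨x.1.1.1 - t₀, hwmem _ x.1.2.1.1⟩,
            congrArg Prod.fst (congrArg Subtype.val x.2)⟩,
         ⟨⟨x.1.1.2, x.1.2.1.2.1⟩,
            congrArg Prod.snd (congrArg Subtype.val x.2)⟩)
      have hψ : Function.Injective ψ := by
        rintro x x' h
        have h1 := congrArg (fun z => (z.1.1.1 : Fin d → F)) h
        have h2 := congrArg (fun z => (z.2.1.1 : Fin d → F)) h
        have hu : x.1.1.1 = x'.1.1.1 := by
          have h1' : x.1.1.1 - t₀ = x'.1.1.1 - t₀ := h1
          exact sub_left_injective h1'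
        apply Subtype.ext
        apply Subtype.ext
        exact Prod.ext hu h2
      calc Nat.card {x : Bad // φ x = y} ≤
          Nat.card ({z : D // T'.mkQ z = y.1.1} × {z : D // T'.mkQ z = y.1.2}) :=
            Nat.card_le_card_of_injective ψ hψ
        _ = p ^ m * p ^ m := by rw [Nat.card_prod, hcoset, hcoset]
    calc Nat.card Bad ≤
        Nat.card {y : (D ⧸ T') × (D ⧸ T') // span F {y.1, y.2} ≠ ⊤} * (p ^ m * p ^ m) :=
          card_le_card_mul_of_fibers φ _ hfib
      _ = (p ^ 2 + (p ^ 2 - 1) * p) * (p ^ m * p ^ m) := by rw [card_dep_pairs hQ]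
  -- line counts
  have hlines : Nat.card {x : (Fin d → F) × (Fin d → F) //
        (x.1 ∈ S ∧ x.2 ∈ D ∧ x.2 ≠ 0) ∧ True} =
      Nat.card {ℓ : Set (Fin d → F) // IsLine F d ℓ ∧ ℓ ⊆ (S : Set (Fin d → F))} *
        (p * (p - 1)) := by
    rw [pairs_card S (fun _ => True)]
    congr 1
    exact Nat.card_congr (Equiv.subtypeEquivRight fun ℓ => by tauto)
  have hgoodlines : Nat.card {x : (Fin d → F) × (Fin d → F) //
        (x.1 ∈ S ∧ x.2 ∈ D ∧ x.2 ≠ 0) ∧ affineSpan F (lineThrough x.1 x.2 ∪ τ) = S} =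
      Nat.card {ℓ : Set (Fin d → F) // IsLine F d ℓ ∧ ℓ ⊆ (S : Set (Fin d → F)) ∧
          affineSpan F (ℓ ∪ τ) = S} * (p * (p - 1)) := by
    rw [pairs_card S (fun ℓ => affineSpan F (ℓ ∪ τ) = S)]
    congr 1
    exact Nat.card_congr (Equiv.subtypeEquivRight fun ℓ => by tauto)
  -- final arithmetic
  set a := Nat.card {ℓ : Set (Fin d → F) // IsLine F d ℓ ∧ ℓ ⊆ (S : Set (Fin d → F))} with ha
  set b := Nat.card {ℓ : Set (Fin d → F) // IsLine F d ℓ ∧ ℓ ⊆ (S : Set (Fin d → F)) ∧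
      affineSpan F (ℓ ∪ τ) = S} with hb
  set GP := Nat.card {x : (Fin d → F) × (Fin d → F) //
      (x.1 ∈ S ∧ x.2 ∈ D ∧ x.2 ≠ 0) ∧ affineSpan F (lineThrough x.1 x.2 ∪ τ) = S} with hGP
  set BP := Nat.card {x : (Fin d → F) × (Fin d → F) //
      (x.1 ∈ S ∧ x.2 ∈ D ∧ x.2 ≠ 0) ∧ ¬ affineSpan F (lineThrough x.1 x.2 ∪ τ) = S} with hBP
  have hp1 : (1:ℕ) ≤ p := by omega
  have hpm1 : (1:ℕ) ≤ p ^ (m + 2) := Nat.one_le_pow _ _ (by omega)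
  have e1 : (a:ℝ) * ((p:ℝ) * ((p:ℝ) - 1)) = (p:ℝ)^(m+2) * ((p:ℝ)^(m+2) - 1) := by
    have h := (hlines.symm.trans htotal)
    have h2 := congrArg (Nat.cast : ℕ → ℝ) h
    push_cast [Nat.cast_sub hp1, Nat.cast_sub hpm1] at h2
    linarith [h2]
  have e2 : (GP:ℝ) = (b:ℝ) * ((p:ℝ) * ((p:ℝ) - 1)) := by
    have h2 := congrArg (Nat.cast : ℕ → ℝ) hgoodlines
    push_cast [Nat.cast_sub hp1] at h2
    linarith [h2]
  have e3 : (p:ℝ)^(m+2) * ((p:ℝ)^(m+2) - 1) = (GP:ℝ) + (BP:ℝ) := by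
    have h := htotal.symm.trans hsplit
    have h2 := congrArg (Nat.cast : ℕ → ℝ) h
    push_cast [Nat.cast_sub hpm1] at h2
    linarith [h2]
  have e4 : (BP:ℝ) ≤ ((p:ℝ)^2 + ((p:ℝ)^2 - 1) * (p:ℝ)) * ((p:ℝ)^m * (p:ℝ)^m) := by
    have h2 := (Nat.cast_le (α := ℝ)).2 hbad
    push_cast [Nat.cast_sub (by nlinarith : (1:ℕ) ≤ p^2)] at h2
    linarith [h2]
  have hpR : (2:ℝ) ≤ (p:ℝ) := by exact_mod_cast hp2
  have hp0 : (0:ℝ) < (p:ℝ) := by linarith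
  have hxR : (1:ℝ) ≤ (p:ℝ)^m := one_le_pow₀ (by linarith)
  have hXpos : (0:ℝ) < (p:ℝ)^m := by linarith
  have key : ((p:ℝ)^2 + ((p:ℝ)^2 - 1) * (p:ℝ)) * ((p:ℝ)^m * (p:ℝ)^m) * (p:ℝ) <
      2 * ((p:ℝ)^(m+2) * ((p:ℝ)^(m+2) - 1)) := by
    have hpm2 : (p:ℝ)^(m+2) = (p:ℝ)^m * (p:ℝ)^2 := by rw [pow_add]
    rw [hpm2]
    have h3 : (3:ℝ) ≤ (p:ℝ)^2 - (p:ℝ) + 1 := by nlinarith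
    have h4 : (3:ℝ) ≤ (p:ℝ)^m * ((p:ℝ)^2 - (p:ℝ) + 1) := by nlinarith
    have h5 : (p:ℝ)^2 * (p:ℝ)^m * 3 ≤
        (p:ℝ)^2 * (p:ℝ)^m * ((p:ℝ)^m * ((p:ℝ)^2 - (p:ℝ) + 1)) :=
      mul_le_mul_of_nonneg_left h4 (by positivity)
    nlinarith [h5, mul_pos (mul_pos hp0 hp0) hXpos]
  have hK0 : (0:ℝ) < (p:ℝ) * ((p:ℝ) - 1) := by nlinarith
  have hBlt : (BP:ℝ) < 2 * (p:ℝ)⁻¹ * ((p:ℝ)^(m+2) * ((p:ℝ)^(m+2) - 1)) := by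
    have hrw : 2 * (p:ℝ)⁻¹ * ((p:ℝ)^(m+2) * ((p:ℝ)^(m+2) - 1)) =
        (2 * ((p:ℝ)^(m+2) * ((p:ℝ)^(m+2) - 1))) / (p:ℝ) := by
      field_simp
    rw [hrw, lt_div_iff₀ hp0]
    calc (BP:ℝ) * (p:ℝ) ≤
        ((p:ℝ)^2 + ((p:ℝ)^2 - 1) * (p:ℝ)) * ((p:ℝ)^m * (p:ℝ)^m) * (p:ℝ) :=
          mul_le_mul_of_nonneg_right e4 hp0.le
      _ < _ := key
  have final : ((1 - 2 * (p:ℝ)⁻¹) * (a:ℝ)) * ((p:ℝ) * ((p:ℝ) - 1)) <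
      (b:ℝ) * ((p:ℝ) * ((p:ℝ) - 1)) := by
    rw [mul_assoc, e1, ← e2]
    nlinarith [hBlt, e3]
  exact (mul_lt_mul_iff_left₀ hK0).1 final
end
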